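/- Let (X, d) be a Polish space, p ∈ [1, ∞), and let μ and ν be probability measures on X with finite p-th moments. Let X₁, …, Xₙ be i.i.d. with law μ and Y₁, …, Yₙ be i.i.d. with law ν, with the two samples independent of each other, and let μₙ and νₙ be the corresponding empirical measures. Then W_p^p(μ, ν) ≤ E [W_p^p(μₙ, νₙ)]. -/

import Mathlib

open MeasureTheory ProbabilityTheory ENNReal

noncomputable section

/-- A coupling of two measures: a measure on the product with the given marginals. -/
def IsCoupling {X : Type*} [MeasurableSpace X] (γ : Measure (X × X)) (μ ν : Measure X) : Prop :=
  γ.map Prod.fst = μ ∧ γ.map Prod.snd = ν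

/-- Wasserstein-p distance (as an extended nonneg real): infimum over couplings. -/
def wassersteinEnn {X : Type*} [MeasurableSpace X] [PseudoEMetricSpace X]
    (p : ℝ) (μ ν : Measure X) : ℝ≥0∞ :=
  ⨅ (γ : Measure (X × X)) (_ : IsCoupling γ μ ν),
    (∫⁻ z, edist z.1 z.2 ^ p ∂γ) ^ (1 / p)

/-- Wasserstein-p distance as a real number. -/
def wasserstein {X : Type*} [MeasurableSpace X] [PseudoEMetricSpace X]
    (p : ℝ) (μ ν : Measure X) : ℝ :=
  (wassersteinEnn p μ ν).toReal
/-- The empirical measure of n sample points: (1/n) ∑ δ_{xᵢ}. -/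
def empiricalMeasure {X : Type*} [MeasurableSpace X] (n : ℕ) (x : Fin n → X) : Measure X :=
  (n : ℝ≥0∞)⁻¹ • ∑ i, Measure.dirac (x i)

/-! ### Auxiliary lemmas -/

open Finset

section AuxGeneral

/-- Measurable selection of a minimizing index among finitely many measurable functions. -/
lemma exists_measurable_argmin {m : ℕ} (hm : 0 < m) {Ω : Type*} [MeasurableSpace Ω]
    (g : Fin m → Ω → ℝ≥0∞) (hg : ∀ j, Measurable (g j)) :
    ∃ k : Ω → Fin m, (∀ j, MeasurableSet {ω | k ω = j}) ∧ ∀ ω, g (k ω) ω = ⨅ j, g j ω := by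
  haveI : NeZero m := ⟨hm.ne'⟩
  classical
  have hGmeas : Measurable fun ω => ⨅ j, g j ω := Measurable.iInf hg
  set s : Ω → Finset (Fin m) := fun ω => univ.filter (fun j => g j ω = ⨅ j', g j' ω) with hs
  have hne : ∀ ω, (s ω).Nonempty := by
    intro ω
    obtain ⟨j0, -, hj0⟩ := Finset.exists_min_image univ (fun j => g j ω) ⟨0, mem_univ 0⟩
    refine ⟨j0, ?_⟩
    simp only [hs, mem_filter, mem_univ, true_and]
    exact le_antisymm (le_iInf fun j => hj0 j (mem_univ j)) (iInf_le _ _)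
  set k : Ω → Fin m := fun ω => (s ω).min' (hne ω) with hk
  have hmemmeas : ∀ j, MeasurableSet {ω | j ∈ s ω} := by
    intro j
    have h0 : {ω | j ∈ s ω} = {ω | g j ω ≤ ⨅ j', g j' ω} ∩ {ω | (⨅ j', g j' ω) ≤ g j ω} := by
      ext ω
      simp only [hs, Set.mem_setOf_eq, mem_filter, mem_univ, true_and, Set.mem_inter_iff]
      constructor
      · intro h; exact ⟨le_of_eq h, ge_of_eq h⟩
      · rintro ⟨h1, h2⟩; exact le_antisymm h1 h2
    rw [h0]
    exact (measurableSet_le (hg j) hGmeas).inter (measurableSet_le hGmeas (hg j))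
  refine ⟨k, ?_, ?_⟩
  · intro j
    have h0 : {ω | k ω = j} = {ω | j ∈ s ω} ∩ ⋂ (i : Fin m), ⋂ (_ : i < j), {ω | i ∈ s ω}ᶜ := by
      ext ω
      simp only [Set.mem_setOf_eq, Set.mem_inter_iff, Set.mem_iInter, Set.mem_compl_iff]
      constructor
      · rintro rfl
        exact ⟨Finset.min'_mem _ _, fun i hi hmem => absurd (Finset.min'_le _ _ hmem) (not_le.2 hi)⟩
      · rintro ⟨hj, hlt⟩
        refine le_antisymm (Finset.min'_le _ _ hj) ?_
        by_contra h
        push_neg at h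
        exact hlt _ h (Finset.min'_mem _ _)
    rw [h0]
    exact (hmemmeas j).inter
      (MeasurableSet.iInter fun i => MeasurableSet.iInter fun _ => (hmemmeas i).compl)
  · intro ω
    have := Finset.min'_mem (s ω) (hne ω)
    simpa [hs] using this

/-- A function selected measurably among finitely many measurable functions is measurable. -/
lemma measurable_select {m : ℕ} {Ω XX : Type*} [MeasurableSpace Ω] [MeasurableSpace XX]
    {k : Ω → Fin m} (hk : ∀ j, MeasurableSet {ω | k ω = j})
    (f : Fin m → Ω → XX) (hf : ∀ j, Measurable (f j)) :
    Measurable fun ω => f (k ω) ω := by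
  intro B hB
  have h0 : (fun ω => f (k ω) ω) ⁻¹' B = ⋃ j, {ω | k ω = j} ∩ f j ⁻¹' B := by
    ext ω
    simp only [Set.mem_preimage, Set.mem_iUnion, Set.mem_inter_iff, Set.mem_setOf_eq]
    constructor
    · intro h; exact ⟨k ω, rfl, h⟩
    · rintro ⟨j, hj, h⟩; rw [hj]; exact h
  rw [h0]
  exact MeasurableSet.iUnion fun j => (hk j).inter (hf j hB)

lemma ennreal_add_rpow_le (p : ℝ) (hp : 0 ≤ p) (u v : ℝ≥0∞) :
    (u + v) ^ p ≤ 2 ^ p * (u ^ p + v ^ p) := by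
  have h1 : u + v ≤ 2 * max u v := by
    rcases le_total u v with h | h
    · calc u + v ≤ v + v := by gcongr
        _ = 2 * v := (two_mul v).symm
        _ ≤ 2 * max u v := by gcongr; exact le_max_right u v
    · calc u + v ≤ u + u := by gcongr
        _ = 2 * u := (two_mul u).symm
        _ ≤ 2 * max u v := by gcongr; exact le_max_left u v
  calc (u + v) ^ p ≤ (2 * max u v) ^ p := ENNReal.rpow_le_rpow h1 hp
    _ = 2 ^ p * (max u v) ^ p := ENNReal.mul_rpow_of_nonneg _ _ hp
    _ ≤ 2 ^ p * (u ^ p + v ^ p) := by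
        gcongr
        rcases le_total u v with h | h
        · rw [max_eq_right h]; exact le_add_self
        · rw [max_eq_left h]; exact le_self_add

lemma edist_rpow_triple {X : Type*} [MetricSpace X] (p : ℝ) (hp : 0 ≤ p) (a b x₀ x₁ : X) :
    edist a b ^ p ≤
      2 ^ p * edist a x₀ ^ p + 2 ^ p * 2 ^ p * edist x₀ x₁ ^ p + 2 ^ p * 2 ^ p * edist x₁ b ^ p := by
  have h1 : edist a b ≤ edist a x₀ + (edist x₀ x₁ + edist x₁ b) := by
    calc edist a b ≤ edist a x₀ + edist x₀ b := edist_triangle _ _ _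
      _ ≤ edist a x₀ + (edist x₀ x₁ + edist x₁ b) := by gcongr; exact edist_triangle _ _ _
  calc edist a b ^ p ≤ (edist a x₀ + (edist x₀ x₁ + edist x₁ b)) ^ p := ENNReal.rpow_le_rpow h1 hp
    _ ≤ 2 ^ p * (edist a x₀ ^ p + (edist x₀ x₁ + edist x₁ b) ^ p) := ennreal_add_rpow_le p hp _ _
    _ ≤ 2 ^ p * (edist a x₀ ^ p + 2 ^ p * (edist x₀ x₁ ^ p + edist x₁ b ^ p)) := by
        gcongr
        exact ennreal_add_rpow_le p hp _ _
    _ = 2 ^ p * edist a x₀ ^ p + 2 ^ p * 2 ^ p * edist x₀ x₁ ^ p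
          + 2 ^ p * 2 ^ p * edist x₁ b ^ p := by ring

/-- grouping lemma: sum over indices of F(g i)/multiplicity = sum over image. -/
lemma sum_div_mult {n : ℕ} {Y : Type*} [DecidableEq Y] (g : Fin n → Y) (F : Y → ℝ) :
    ∑ i, F (g i) / ((univ.filter fun i' => g i' = g i).card : ℝ) = ∑ a ∈ univ.image g, F a := by
  rw [← Finset.sum_fiberwise_of_maps_to (g := g) (t := univ.image g)
    (fun i _ => mem_image_of_mem g (mem_univ i))
    (fun i => F (g i) / ((univ.filter fun i' => g i' = g i).card : ℝ))]
  refine Finset.sum_congr rfl fun a ha => ?_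
  obtain ⟨i0, -, rfl⟩ := Finset.mem_image.1 ha
  have hcard : ((univ.filter fun i' => g i' = g i0).card : ℝ) ≠ 0 := by
    have : i0 ∈ univ.filter fun i' => g i' = g i0 := by simp
    exact_mod_cast (Finset.card_pos.2 ⟨i0, this⟩).ne'
  have : ∀ i ∈ univ.filter fun i' => g i' = g i0,
      F (g i) / ((univ.filter fun i' => g i' = g i).card : ℝ)
        = F (g i0) / ((univ.filter fun i' => g i' = g i0).card : ℝ) := by
    intro i hi
    have hgi : g i = g i0 := by simpa using hi
    rw [hgi]
  rw [Finset.sum_congr rfl this, Finset.sum_const, nsmul_eq_mul]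
  field_simp

end AuxGeneral

section AuxEmp

variable {X : Type*} [MetricSpace X] [MeasurableSpace X] [BorelSpace X]
  [TopologicalSpace.SeparableSpace X]

lemma emp_apply (n : ℕ) (x : Fin n → X) {B : Set X} (hB : MeasurableSet B) :
    empiricalMeasure n x B = (n : ℝ≥0∞)⁻¹ * ∑ i, B.indicator 1 (x i) := by
  simp [empiricalMeasure, Measure.smul_apply, Measure.finset_sum_apply,
    Measure.dirac_apply' _ hB, smul_eq_mul]

lemma emp_singleton (n : ℕ) (x : Fin n → X) (a : X) [DecidableEq X] :
    empiricalMeasure n x {a} =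
      (n : ℝ≥0∞)⁻¹ * ((univ.filter fun i => x i = a).card : ℝ≥0∞) := by
  rw [emp_apply n x (measurableSet_singleton a)]
  congr 1
  rw [Finset.card_filter, Nat.cast_sum]
  refine Finset.sum_congr rfl fun i _ => ?_
  by_cases h : x i = a <;> simp [Set.indicator_apply, h]

lemma emp_compl_range (n : ℕ) (x : Fin n → X) :
    empiricalMeasure n x ((Set.range x)ᶜ) = 0 := by
  rw [emp_apply n x (((Set.finite_range x).measurableSet).compl)]
  have : ∀ i, ((Set.range x)ᶜ).indicator (1 : X → ℝ≥0∞) (x i) = 0 := fun i =>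
    Set.indicator_of_notMem (by simp) _
  simp [this]

lemma measurable_cost (p : ℝ) : Measurable (fun z : X × X => edist z.1 z.2 ^ p) := by
  haveI : SecondCountableTopology X := UniformSpace.secondCountable_of_separable X
  exact (ENNReal.continuous_rpow_const.measurable).comp measurable_edist

/-- The coupling of two empirical measures induced by a permutation matching, and its cost. -/
lemma perm_coupling (p : ℝ) (n : ℕ) (x y : Fin n → X) (σ : Equiv.Perm (Fin n)) :
    IsCoupling ((n : ℝ≥0∞)⁻¹ • ∑ i, Measure.dirac (x i, y (σ i)))
      (empiricalMeasure n x) (empiricalMeasure n y) ∧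
    (∫⁻ z, edist z.1 z.2 ^ p ∂((n : ℝ≥0∞)⁻¹ • ∑ i, Measure.dirac (x i, y (σ i))))
      = (n : ℝ≥0∞)⁻¹ * ∑ i, edist (x i) (y (σ i)) ^ p := by
  constructor
  · constructor
    · ext B hB
      rw [Measure.map_apply measurable_fst hB, emp_apply n x hB]
      simp only [Measure.smul_apply, Measure.finset_sum_apply, smul_eq_mul]
      congr 1
      refine Finset.sum_congr rfl fun i _ => ?_
      by_cases h : x i ∈ B <;> simp [Set.indicator_apply, h]
    · ext B hB
      rw [Measure.map_apply measurable_snd hB, emp_apply n y hB]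
      simp only [Measure.smul_apply, Measure.finset_sum_apply, smul_eq_mul]
      congr 1
      rw [← Equiv.sum_comp σ (fun j => B.indicator (1 : X → ℝ≥0∞) (y j))]
      refine Finset.sum_congr rfl fun i _ => ?_
      by_cases h : y (σ i) ∈ B <;> simp [Set.indicator_apply, h]
  · rw [lintegral_smul_measure, lintegral_finset_sum_measure]
    congr 1
    exact Finset.sum_congr rfl fun i _ => lintegral_dirac _ _

set_option maxHeartbeats 1000000 in
/-- KEY LEMMA: any coupling of two empirical measures costs at least some permutation matching. -/
lemma exists_perm_le_cost (p : ℝ) (hp : 0 ≤ p) (n : ℕ) (hn : 0 < n) (x y : Fin n → X)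
    (γ : Measure (X × X)) (hγ : IsCoupling γ (empiricalMeasure n x) (empiricalMeasure n y)) :
    ∃ σ : Equiv.Perm (Fin n),
      (n : ℝ≥0∞)⁻¹ * ∑ i, edist (x i) (y (σ i)) ^ p ≤ ∫⁻ z, edist z.1 z.2 ^ p ∂γ := by
  classical
  haveI : SecondCountableTopology X := UniformSpace.secondCountable_of_separable X
  obtain ⟨hfst, hsnd⟩ := hγ
  have hfiber1 : ∀ a : X, γ (Prod.fst ⁻¹' {a}) = empiricalMeasure n x {a} := fun a => by
    rw [← hfst, Measure.map_apply measurable_fst (measurableSet_singleton a)]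
  have hfiber2 : ∀ b : X, γ (Prod.snd ⁻¹' {b}) = empiricalMeasure n y {b} := fun b => by
    rw [← hsnd, Measure.map_apply measurable_snd (measurableSet_singleton b)]
  set Sx : Finset X := univ.image x with hSx
  set Sy : Finset X := univ.image y with hSy
  have hxmem : ∀ i, x i ∈ Sx := fun i => mem_image_of_mem x (mem_univ i)
  have hymem : ∀ j, y j ∈ Sy := fun j => mem_image_of_mem y (mem_univ j)
  have hnull1 : γ (Prod.fst ⁻¹' ((Set.range x)ᶜ)) = 0 := by
    rw [← Measure.map_apply measurable_fst ((Set.finite_range x).measurableSet.compl), hfst]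
    exact emp_compl_range n x
  have hnull2 : γ (Prod.snd ⁻¹' ((Set.range y)ᶜ)) = 0 := by
    rw [← Measure.map_apply measurable_snd ((Set.finite_range y).measurableSet.compl), hsnd]
    exact emp_compl_range n y
  have hrow : ∀ a : X, ∑ b ∈ Sy, γ {(a, b)} = γ (Prod.fst ⁻¹' {a}) := by
    intro a
    have h1 : γ (Prod.fst ⁻¹' {a}) = γ (Prod.fst ⁻¹' {a} ∩ Prod.snd ⁻¹' (Set.range y)) := by
      refine le_antisymm ?_ (measure_mono Set.inter_subset_left)
      calc γ (Prod.fst ⁻¹' {a})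
          ≤ γ ((Prod.fst ⁻¹' {a} ∩ Prod.snd ⁻¹' (Set.range y))
              ∪ Prod.snd ⁻¹' ((Set.range y)ᶜ)) := by
            refine measure_mono fun z hz => ?_
            by_cases h : z.2 ∈ Set.range y
            · exact Or.inl ⟨hz, h⟩
            · exact Or.inr h
        _ ≤ γ (Prod.fst ⁻¹' {a} ∩ Prod.snd ⁻¹' (Set.range y))
              + γ (Prod.snd ⁻¹' ((Set.range y)ᶜ)) := measure_union_le _ _
        _ = γ (Prod.fst ⁻¹' {a} ∩ Prod.snd ⁻¹' (Set.range y)) := by rw [hnull2, add_zero]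
    have h2 : Prod.fst ⁻¹' {a} ∩ Prod.snd ⁻¹' (Set.range y) = ⋃ b ∈ Sy, {((a, b) : X × X)} := by
      ext ⟨u, v⟩
      simp only [Set.mem_inter_iff, Set.mem_preimage, Set.mem_singleton_iff, Set.mem_iUnion,
        Prod.mk.injEq]
      constructor
      · rintro ⟨rfl, j, rfl⟩
        exact ⟨y j, hymem j, rfl, rfl⟩
      · rintro ⟨b, hb, rfl, rfl⟩
        obtain ⟨j, -, rfl⟩ := Finset.mem_image.1 hb
        exact ⟨rfl, j, rfl⟩
    rw [h1, h2, measure_biUnion_finset ?_ (fun b _ => measurableSet_singleton _)]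
    intro b hb b' hb' hbb'
    simp only [Function.onFun, Set.disjoint_singleton, ne_eq, Prod.mk.injEq]
    exact fun h => hbb' h.2
  have hcol : ∀ b : X, ∑ a ∈ Sx, γ {(a, b)} = γ (Prod.snd ⁻¹' {b}) := by
    intro b
    have h1 : γ (Prod.snd ⁻¹' {b}) = γ (Prod.snd ⁻¹' {b} ∩ Prod.fst ⁻¹' (Set.range x)) := by
      refine le_antisymm ?_ (measure_mono Set.inter_subset_left)
      calc γ (Prod.snd ⁻¹' {b})
          ≤ γ ((Prod.snd ⁻¹' {b} ∩ Prod.fst ⁻¹' (Set.range x))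
              ∪ Prod.fst ⁻¹' ((Set.range x)ᶜ)) := by
            refine measure_mono fun z hz => ?_
            by_cases h : z.1 ∈ Set.range x
            · exact Or.inl ⟨hz, h⟩
            · exact Or.inr h
        _ ≤ γ (Prod.snd ⁻¹' {b} ∩ Prod.fst ⁻¹' (Set.range x))
              + γ (Prod.fst ⁻¹' ((Set.range x)ᶜ)) := measure_union_le _ _
        _ = γ (Prod.snd ⁻¹' {b} ∩ Prod.fst ⁻¹' (Set.range x)) := by rw [hnull1, add_zero]
    have h2 : Prod.snd ⁻¹' {b} ∩ Prod.fst ⁻¹' (Set.range x) = ⋃ a ∈ Sx, {((a, b) : X × X)} := by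
      ext ⟨u, v⟩
      simp only [Set.mem_inter_iff, Set.mem_preimage, Set.mem_singleton_iff, Set.mem_iUnion,
        Prod.mk.injEq]
      constructor
      · rintro ⟨rfl, i, rfl⟩
        exact ⟨x i, hxmem i, rfl, rfl⟩
      · rintro ⟨a, ha, rfl, rfl⟩
        obtain ⟨i, -, rfl⟩ := Finset.mem_image.1 ha
        exact ⟨rfl, i, rfl⟩
    rw [h1, h2, measure_biUnion_finset ?_ (fun a _ => measurableSet_singleton _)]
    intro a ha a' ha' haa'
    simp only [Function.onFun, Set.disjoint_singleton, ne_eq, Prod.mk.injEq]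
    exact fun h => haa' h.1
  have hfin : ∀ z : X × X, γ {z} ≠ ∞ := by
    intro z
    have hsub : ({z} : Set (X × X)) ⊆ Prod.fst ⁻¹' {z.1} := fun w hw => by
      rw [Set.mem_singleton_iff.1 hw]; exact rfl
    refine ne_of_lt (lt_of_le_of_lt (measure_mono hsub) ?_)
    rw [hfiber1 z.1, emp_singleton]
    exact ENNReal.mul_lt_top (ENNReal.inv_lt_top.2 (by exact_mod_cast hn)) (by simp)
  set cx : Fin n → ℕ := fun i => (univ.filter fun i' => x i' = x i).card with hcx
  set dy : Fin n → ℕ := fun j => (univ.filter fun j' => y j' = y j).card with hdy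
  have hcx_pos : ∀ i, 0 < cx i := fun i => Finset.card_pos.2 ⟨i, by simp [hcx]⟩
  have hdy_pos : ∀ j, 0 < dy j := fun j => Finset.card_pos.2 ⟨j, by simp [hdy]⟩
  set M : Matrix (Fin n) (Fin n) ℝ :=
    fun i j => (γ {(x i, y j)}).toReal / ((cx i : ℝ) * (dy j : ℝ)) with hM
  have hMrow : ∀ i, ∑ j, M i j = 1 / n := by
    intro i
    have step1 : ∑ j, M i j = (1 / (cx i : ℝ)) * ∑ j, (γ {(x i, y j)}).toReal / (dy j : ℝ) := by
      rw [Finset.mul_sum]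
      refine Finset.sum_congr rfl fun j _ => ?_
      rw [hM]
      field_simp
    have step2 : ∑ j, (γ {(x i, y j)}).toReal / (dy j : ℝ)
        = ∑ b ∈ Sy, (γ {(x i, b)}).toReal :=
      sum_div_mult y (fun b => (γ {(x i, b)}).toReal)
    have step3 : ∑ b ∈ Sy, (γ {(x i, b)}).toReal = (γ (Prod.fst ⁻¹' {x i})).toReal := by
      rw [← hrow (x i), ENNReal.toReal_sum (fun b _ => hfin _)]
    have step4 : (γ (Prod.fst ⁻¹' {x i})).toReal = (cx i : ℝ) / n := by
      rw [hfiber1, emp_singleton, ENNReal.toReal_mul]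
      simp [div_eq_inv_mul]
      exact Or.inl rfl
    rw [step1, step2, step3, step4]
    have h1 : (cx i : ℝ) ≠ 0 := by exact_mod_cast (hcx_pos i).ne'
    field_simp
  have hMcol : ∀ j, ∑ i, M i j = 1 / n := by
    intro j
    have step1 : ∑ i, M i j = (1 / (dy j : ℝ)) * ∑ i, (γ {(x i, y j)}).toReal / (cx i : ℝ) := by
      rw [Finset.mul_sum]
      refine Finset.sum_congr rfl fun i _ => ?_
      rw [hM]
      field_simp
    have step2 : ∑ i, (γ {(x i, y j)}).toReal / (cx i : ℝ)
        = ∑ a ∈ Sx, (γ {(a, y j)}).toReal :=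
      sum_div_mult x (fun a => (γ {(a, y j)}).toReal)
    have step3 : ∑ a ∈ Sx, (γ {(a, y j)}).toReal = (γ (Prod.snd ⁻¹' {y j})).toReal := by
      rw [← hcol (y j), ENNReal.toReal_sum (fun a _ => hfin _)]
    have step4 : (γ (Prod.snd ⁻¹' {y j})).toReal = (dy j : ℝ) / n := by
      rw [hfiber2, emp_singleton, ENNReal.toReal_mul]
      simp [div_eq_inv_mul]
      exact Or.inl rfl
    rw [step1, step2, step3, step4]
    have h1 : (dy j : ℝ) ≠ 0 := by exact_mod_cast (hdy_pos j).ne'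
    field_simp
  have hN : (n : ℝ) • M ∈ doublyStochastic ℝ (Fin n) := by
    rw [mem_doublyStochastic_iff_sum]
    have hn' : (0 : ℝ) < n := by exact_mod_cast hn
    refine ⟨fun i j => ?_, fun i => ?_, fun j => ?_⟩
    · exact mul_nonneg hn'.le (div_nonneg ENNReal.toReal_nonneg
        (mul_nonneg (Nat.cast_nonneg _) (Nat.cast_nonneg _)))
    · simp only [Matrix.smul_apply, smul_eq_mul, ← Finset.mul_sum, hMrow]
      field_simp
    · simp only [Matrix.smul_apply, smul_eq_mul, ← Finset.mul_sum, hMcol]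
      field_simp
  obtain ⟨w, hw0, hw1, hweq⟩ := exists_eq_sum_perm_of_mem_doublyStochastic hN
  set D : Fin n → Fin n → ℝ := fun i j => (edist (x i) (y j) ^ p).toReal with hD
  obtain ⟨σ0, -, hσ0⟩ := Finset.exists_min_image univ
    (fun σ : Equiv.Perm (Fin n) => ∑ i, D i (σ i)) ⟨1, mem_univ 1⟩
  refine ⟨σ0, ?_⟩
  have hcost_eq : ∑ i, ∑ j, D i j * M i j
      = ∑ z ∈ Sx ×ˢ Sy, (edist z.1 z.2 ^ p).toReal * (γ {z}).toReal := by
    have inner : ∀ i, ∑ j, D i j * M i j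
        = (∑ b ∈ Sy, (edist (x i) b ^ p).toReal * (γ {(x i, b)}).toReal) / (cx i : ℝ) := by
      intro i
      have hterm : ∀ j, D i j * M i j
          = ((edist (x i) (y j) ^ p).toReal * (γ {(x i, y j)}).toReal / (dy j : ℝ))
              / (cx i : ℝ) := by
        intro j
        rw [hD, hM]
        field_simp
      rw [Finset.sum_congr rfl (fun j _ => hterm j), ← Finset.sum_div]
      congr 1
      exact sum_div_mult y (fun b => (edist (x i) b ^ p).toReal * (γ {(x i, b)}).toReal)
    have outer : ∑ i, ∑ j, D i j * M i j
        = ∑ a ∈ Sx, ∑ b ∈ Sy, (edist a b ^ p).toReal * (γ {(a, b)}).toReal := by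
      rw [Finset.sum_congr rfl (fun i _ => inner i)]
      exact sum_div_mult x (fun a => ∑ b ∈ Sy, (edist a b ^ p).toReal * (γ {(a, b)}).toReal)
    rw [outer, Finset.sum_product]
  have hperm_sum : ∀ σ : Equiv.Perm (Fin n), ∑ i, ∑ j, D i j * (σ.permMatrix ℝ) i j
      = ∑ i, D i (σ i) := by
    intro σ
    refine Finset.sum_congr rfl fun i _ => ?_
    have hterm : ∀ j, D i j * (σ.permMatrix ℝ) i j = if σ i = j then D i j else 0 := by
      intro j
      simp [Equiv.Perm.permMatrix, PEquiv.toMatrix_apply, Equiv.toPEquiv_apply, mul_ite]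
    rw [Finset.sum_congr rfl (fun j _ => hterm j), Finset.sum_ite_eq univ (σ i) (D i),
      if_pos (mem_univ _)]
  have hbound : (1 / (n : ℝ)) * ∑ i, D i (σ0 i) ≤ ∑ i, ∑ j, D i j * M i j := by
    have hsum_smul : ∑ i, ∑ j, D i j * ((n : ℝ) • M) i j
        = (n : ℝ) * ∑ i, ∑ j, D i j * M i j := by
      rw [Finset.mul_sum]
      refine Finset.sum_congr rfl fun i _ => ?_
      rw [Finset.mul_sum]
      refine Finset.sum_congr rfl fun j _ => ?_
      simp [Matrix.smul_apply]; ring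
    have hsum_birkhoff : ∑ i, ∑ j, D i j * ((n : ℝ) • M) i j
        = ∑ σ : Equiv.Perm (Fin n), w σ * ∑ i, D i (σ i) := by
      rw [← hweq]
      have hterm : ∀ i j, D i j * (∑ σ : Equiv.Perm (Fin n), w σ • σ.permMatrix ℝ) i j
          = ∑ σ : Equiv.Perm (Fin n), w σ * (D i j * (σ.permMatrix ℝ) i j) := by
        intro i j
        rw [Matrix.sum_apply, Finset.mul_sum]
        refine Finset.sum_congr rfl fun σ _ => ?_
        simp [Matrix.smul_apply]; ring
      calc ∑ i, ∑ j, D i j * (∑ σ : Equiv.Perm (Fin n), w σ • σ.permMatrix ℝ) i j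
          = ∑ i, ∑ j, ∑ σ : Equiv.Perm (Fin n), w σ * (D i j * (σ.permMatrix ℝ) i j) :=
            Finset.sum_congr rfl fun i _ => Finset.sum_congr rfl fun j _ => hterm i j
        _ = ∑ i, ∑ σ : Equiv.Perm (Fin n), ∑ j, w σ * (D i j * (σ.permMatrix ℝ) i j) :=
            Finset.sum_congr rfl fun i _ => Finset.sum_comm
        _ = ∑ σ : Equiv.Perm (Fin n), ∑ i, ∑ j, w σ * (D i j * (σ.permMatrix ℝ) i j) :=
            Finset.sum_comm
        _ = ∑ σ : Equiv.Perm (Fin n), w σ * ∑ i, D i (σ i) := by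
            refine Finset.sum_congr rfl fun σ _ => ?_
            rw [← hperm_sum σ, Finset.mul_sum]
            refine Finset.sum_congr rfl fun i _ => ?_
            rw [Finset.mul_sum]
    have hmin : ∑ i, D i (σ0 i) ≤ ∑ σ : Equiv.Perm (Fin n), w σ * ∑ i, D i (σ i) := by
      calc ∑ i, D i (σ0 i) = (∑ σ : Equiv.Perm (Fin n), w σ) * ∑ i, D i (σ0 i) := by
            rw [hw1, one_mul]
        _ = ∑ σ : Equiv.Perm (Fin n), w σ * ∑ i, D i (σ0 i) := Finset.sum_mul _ _ _
        _ ≤ ∑ σ : Equiv.Perm (Fin n), w σ * ∑ i, D i (σ i) :=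
            Finset.sum_le_sum fun σ _ => mul_le_mul_of_nonneg_left (hσ0 σ (mem_univ σ)) (hw0 σ)
    have hn' : (0 : ℝ) < n := by exact_mod_cast hn
    rw [div_mul_eq_mul_div, one_mul, div_le_iff₀ hn']
    calc (∑ i, D i (σ0 i)) ≤ ∑ σ : Equiv.Perm (Fin n), w σ * ∑ i, D i (σ i) := hmin
      _ = ∑ i, ∑ j, D i j * ((n : ℝ) • M) i j := hsum_birkhoff.symm
      _ = (n : ℝ) * ∑ i, ∑ j, D i j * M i j := hsum_smul
      _ = (∑ i, ∑ j, D i j * M i j) * n := by ring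
  have hatoms_le : ∑ z ∈ Sx ×ˢ Sy, (edist z.1 z.2 ^ p) * γ {z}
      ≤ ∫⁻ z, edist z.1 z.2 ^ p ∂γ := by
    calc ∑ z ∈ Sx ×ˢ Sy, (edist z.1 z.2 ^ p) * γ {z}
        = ∫⁻ z in (Sx ×ˢ Sy : Finset (X × X)), edist z.1 z.2 ^ p ∂γ :=
          (lintegral_finset (Sx ×ˢ Sy) (fun z => edist z.1 z.2 ^ p)).symm
      _ ≤ ∫⁻ z, edist z.1 z.2 ^ p ∂γ := setLIntegral_le_lintegral _ _
  have hterm_fin : ∀ z ∈ Sx ×ˢ Sy, (edist z.1 z.2 ^ p) * γ {z} ≠ ∞ := by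
    intro z _
    exact ENNReal.mul_ne_top (ENNReal.rpow_ne_top_of_nonneg hp (edist_ne_top _ _)) (hfin z)
  have hLHS_fin : (n : ℝ≥0∞)⁻¹ * ∑ i, edist (x i) (y (σ0 i)) ^ p ≠ ∞ := by
    refine ENNReal.mul_ne_top (ENNReal.inv_ne_top.2 (by exact_mod_cast hn.ne')) ?_
    exact (ENNReal.sum_lt_top.2 fun i _ =>
      (ENNReal.rpow_lt_top_of_nonneg hp (edist_ne_top _ _))).ne
  have hRHS_fin : ∑ z ∈ Sx ×ˢ Sy, (edist z.1 z.2 ^ p) * γ {z} ≠ ∞ :=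
    (ENNReal.sum_lt_top.2 fun z hz => lt_top_iff_ne_top.2 (hterm_fin z hz)).ne
  refine le_trans ?_ hatoms_le
  rw [← ENNReal.toReal_le_toReal hLHS_fin hRHS_fin]
  have hL : ((n : ℝ≥0∞)⁻¹ * ∑ i, edist (x i) (y (σ0 i)) ^ p).toReal
      = (1 / (n : ℝ)) * ∑ i, D i (σ0 i) := by
    rw [ENNReal.toReal_mul, ENNReal.toReal_sum (fun i _ =>
      ENNReal.rpow_ne_top_of_nonneg hp (edist_ne_top _ _))]
    simp [hD, one_div]
  have hR : (∑ z ∈ Sx ×ˢ Sy, (edist z.1 z.2 ^ p) * γ {z}).toReal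
      = ∑ z ∈ Sx ×ˢ Sy, (edist z.1 z.2 ^ p).toReal * (γ {z}).toReal := by
    rw [ENNReal.toReal_sum hterm_fin]
    exact Finset.sum_congr rfl fun z _ => ENNReal.toReal_mul
  rw [hL, hR, ← hcost_eq]
  exact hbound

/-- The Wasserstein distance between empirical measures equals the min-cost permutation
matching (to the power 1/p). -/
lemma wassersteinEnn_emp (p : ℝ) (hp : 1 ≤ p) (n : ℕ) (hn : 0 < n) (x y : Fin n → X) :
    wassersteinEnn p (empiricalMeasure n x) (empiricalMeasure n y)
      = (⨅ σ : Equiv.Perm (Fin n),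
          (n : ℝ≥0∞)⁻¹ * ∑ i, edist (x i) (y (σ i)) ^ p) ^ (1 / p) := by
  have hp0 : (0 : ℝ) ≤ p := le_trans zero_le_one hp
  obtain ⟨σ0, -, hσ0⟩ := Finset.exists_min_image univ
    (fun σ : Equiv.Perm (Fin n) => (n : ℝ≥0∞)⁻¹ * ∑ i, edist (x i) (y (σ i)) ^ p)
    ⟨1, mem_univ 1⟩
  have hmin : (⨅ σ : Equiv.Perm (Fin n), (n : ℝ≥0∞)⁻¹ * ∑ i, edist (x i) (y (σ i)) ^ p)
      = (n : ℝ≥0∞)⁻¹ * ∑ i, edist (x i) (y (σ0 i)) ^ p :=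
    le_antisymm (iInf_le _ σ0) (le_iInf fun σ => hσ0 σ (mem_univ σ))
  apply le_antisymm
  · rw [hmin]
    obtain ⟨hcoup, hcost⟩ := perm_coupling p n x y σ0
    calc wassersteinEnn p (empiricalMeasure n x) (empiricalMeasure n y)
        ≤ (∫⁻ z, edist z.1 z.2 ^ p
            ∂((n : ℝ≥0∞)⁻¹ • ∑ i, Measure.dirac (x i, y (σ0 i)))) ^ (1 / p) :=
          iInf_le_of_le _ (iInf_le _ hcoup)
      _ = ((n : ℝ≥0∞)⁻¹ * ∑ i, edist (x i) (y (σ0 i)) ^ p) ^ (1 / p) := by rw [hcost]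
  · refine le_iInf fun γ => le_iInf fun hγ => ?_
    obtain ⟨σ, hσ⟩ := exists_perm_le_cost p hp0 n hn x y γ hγ
    exact ENNReal.rpow_le_rpow (le_trans (iInf_le _ σ) hσ) (by positivity)

lemma wasserstein_pow_emp (p : ℝ) (hp : 1 ≤ p) (n : ℕ) (hn : 0 < n) (x y : Fin n → X) :
    wasserstein p (empiricalMeasure n x) (empiricalMeasure n y) ^ p
      = (⨅ σ : Equiv.Perm (Fin n),
          (n : ℝ≥0∞)⁻¹ * ∑ i, edist (x i) (y (σ i)) ^ p).toReal := by
  have hpn : p ≠ 0 := by positivity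
  rw [wasserstein, wassersteinEnn_emp p hp n hn x y, ENNReal.toReal_rpow,
    ← ENNReal.rpow_mul, one_div_mul_cancel hpn, ENNReal.rpow_one]

end AuxEmp

/-- W_p^p(μ, ν) ≤ E[W_p^p(μₙ, νₙ)] for independent i.i.d. samples from μ and ν. -/
theorem wasserstein_pow_le_expected_empirical {X : Type*} [MetricSpace X] [CompleteSpace X]
    [TopologicalSpace.SeparableSpace X] [MeasurableSpace X] [BorelSpace X]
    (p : ℝ) (hp : 1 ≤ p)
    {Ω : Type*} [MeasurableSpace Ω] (P : Measure Ω) [IsProbabilityMeasure P]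
    (n : ℕ) (hn : 0 < n)
    (Y Z : Fin n → Ω → X)
    (hYmeas : ∀ i, Measurable (Y i)) (hZmeas : ∀ i, Measurable (Z i))
    (μ ν : Measure X) [IsProbabilityMeasure μ] [IsProbabilityMeasure ν]
    (hμmom : ∃ x₀ : X, ∫⁻ x, edist x₀ x ^ p ∂μ < ⊤)
    (hνmom : ∃ x₀ : X, ∫⁻ x, edist x₀ x ^ p ∂ν < ⊤)
    -- i.i.d. samples from μ and from ν, mutually independent
    (hYlaw : ∀ i, P.map (Y i) = μ) (hZlaw : ∀ i, P.map (Z i) = ν)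
    (hYindep : iIndepFun Y P)
    (hZindep : iIndepFun Z P)
    (hindep : IndepFun (fun ω i => Y i ω) (fun ω i => Z i ω) P) :
    wasserstein p μ ν ^ p ≤
      ∫ ω, wasserstein p (empiricalMeasure n fun i => Y i ω)
          (empiricalMeasure n fun i => Z i ω) ^ p ∂P := by
  classical
  haveI : SecondCountableTopology X := UniformSpace.secondCountable_of_separable X
  have hp0 : (0 : ℝ) < p := lt_of_lt_of_le one_pos hp
  have hpn : p ≠ 0 := hp0.ne'
  have hnne : (n : ℝ≥0∞) ≠ 0 := by exact_mod_cast hn.ne'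
  have hninv : (n : ℝ≥0∞)⁻¹ ≠ ∞ := ENNReal.inv_ne_top.2 hnne
  have hc : Measurable (fun z : X × X => edist z.1 z.2 ^ p) := measurable_cost p
  set Gp : Equiv.Perm (Fin n) → Ω → ℝ≥0∞ :=
    fun σ ω => (n : ℝ≥0∞)⁻¹ * ∑ i, edist (Y i ω) (Z (σ i) ω) ^ p with hGp
  have hGpmeas : ∀ σ, Measurable (Gp σ) := by
    intro σ
    exact (Finset.measurable_sum _ fun i _ =>
      hc.comp ((hYmeas i).prodMk (hZmeas (σ i)))).const_mul _
  have hGpfin : ∀ σ ω, Gp σ ω ≠ ∞ := by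
    intro σ ω
    exact ENNReal.mul_ne_top hninv (ENNReal.sum_lt_top.2 fun i _ =>
      ENNReal.rpow_lt_top_of_nonneg hp0.le (edist_ne_top _ _)).ne
  set G : Ω → ℝ≥0∞ := fun ω => ⨅ σ : Equiv.Perm (Fin n), Gp σ ω with hG
  have hGmeas : Measurable G := Measurable.iInf hGpmeas
  have hGlt : ∀ ω, G ω < ∞ := fun ω =>
    lt_of_le_of_lt (iInf_le _ 1) (lt_top_iff_ne_top.2 (hGpfin 1 ω))
  -- measurable argmin over permutations
  set m := Fintype.card (Equiv.Perm (Fin n)) with hm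
  have hmpos : 0 < m := Fintype.card_pos
  set e : Fin m ≃ Equiv.Perm (Fin n) := (Fintype.equivFin _).symm with he
  obtain ⟨k, hkmeas, hkmin⟩ := exists_measurable_argmin hmpos (fun j ω => Gp (e j) ω)
    (fun j => hGpmeas (e j))
  have hkG : ∀ ω, Gp (e (k ω)) ω = G ω := by
    intro ω
    rw [hkmin ω, hG]
    exact e.surjective.iInf_comp (fun σ => Gp σ ω)
  -- the averaged selected coupling
  set T : Fin n → Ω → X × X := fun i ω => (Y i ω, Z (e (k ω) i) ω) with hT
  have hTmeas : ∀ i, Measurable (T i) := by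
    intro i
    exact (hYmeas i).prodMk
      (measurable_select hkmeas (fun j ω => Z (e j i) ω) (fun j => hZmeas (e j i)))
  set γbar : Measure (X × X) := (n : ℝ≥0∞)⁻¹ • ∑ i, P.map (T i) with hγbar
  have hpart : ∀ S : Set Ω, MeasurableSet S → ∑ j, P ({ω | k ω = j} ∩ S) = P S := by
    intro S hS
    rw [← tsum_fintype (L := SummationFilter.unconditional _), ← measure_iUnion (fun j j' hjj' =>
        Set.disjoint_left.2 fun ω h1 h2 => hjj' (h1.1.symm.trans h2.1))
      (fun j => (hkmeas j).inter hS)]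
    congr 1
    ext ω
    simp only [Set.mem_iUnion, Set.mem_inter_iff, Set.mem_setOf_eq]
    exact ⟨fun ⟨j, hj, h⟩ => h, fun h => ⟨k ω, rfl, h⟩⟩
  have hcoup : IsCoupling γbar μ ν := by
    constructor
    · ext B hB
      rw [Measure.map_apply measurable_fst hB]
      simp only [hγbar, Measure.smul_apply, Measure.finset_sum_apply, smul_eq_mul]
      have hterm : ∀ i, (P.map (T i)) (Prod.fst ⁻¹' B) = μ B := by
        intro i
        rw [Measure.map_apply (hTmeas i) (measurable_fst hB)]
        have hpre : T i ⁻¹' (Prod.fst ⁻¹' B) = Y i ⁻¹' B := rfl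
        rw [hpre, ← Measure.map_apply (hYmeas i) hB, hYlaw i]
      rw [Finset.sum_congr rfl fun i _ => hterm i, Finset.sum_const, card_univ,
        Fintype.card_fin, nsmul_eq_mul, ← mul_assoc,
        ENNReal.inv_mul_cancel hnne (by simp), one_mul]
    · ext B hB
      rw [Measure.map_apply measurable_snd hB]
      simp only [hγbar, Measure.smul_apply, Measure.finset_sum_apply, smul_eq_mul]
      have hstep : ∀ i, (P.map (T i)) (Prod.snd ⁻¹' B)
          = ∑ j, P ({ω | k ω = j} ∩ Z (e j i) ⁻¹' B) := by
        intro i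
        rw [Measure.map_apply (hTmeas i) (measurable_snd hB)]
        have hset : T i ⁻¹' (Prod.snd ⁻¹' B) = ⋃ j, ({ω | k ω = j} ∩ Z (e j i) ⁻¹' B) := by
          ext ω
          simp only [hT, Set.mem_preimage, Set.mem_iUnion, Set.mem_inter_iff, Set.mem_setOf_eq]
          constructor
          · intro h; exact ⟨k ω, rfl, h⟩
          · rintro ⟨j, hj, h⟩; rw [hj]; exact h
        rw [hset, measure_iUnion (fun j j' hjj' =>
            Set.disjoint_left.2 fun ω h1 h2 => hjj' (h1.1.symm.trans h2.1))
          (fun j => (hkmeas j).inter (hZmeas (e j i) hB))]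
        exact tsum_fintype _
      rw [Finset.sum_congr rfl fun i _ => hstep i, Finset.sum_comm]
      have hreind : ∀ j, ∑ i, P ({ω | k ω = j} ∩ Z (e j i) ⁻¹' B)
          = ∑ i, P ({ω | k ω = j} ∩ Z i ⁻¹' B) :=
        fun j => Equiv.sum_comp (e j) (fun i' => P ({ω | k ω = j} ∩ Z i' ⁻¹' B))
      rw [Finset.sum_congr rfl fun j _ => hreind j, Finset.sum_comm]
      have hterm : ∀ i, ∑ j, P ({ω | k ω = j} ∩ Z i ⁻¹' B) = ν B := by
        intro i
        rw [hpart _ (hZmeas i hB), ← Measure.map_apply (hZmeas i) hB, hZlaw i]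
      rw [Finset.sum_congr rfl fun i _ => hterm i, Finset.sum_const, card_univ,
        Fintype.card_fin, nsmul_eq_mul, ← mul_assoc,
        ENNReal.inv_mul_cancel hnne (by simp), one_mul]
  have hcost : ∫⁻ z, edist z.1 z.2 ^ p ∂γbar = ∫⁻ ω, G ω ∂P := by
    have hmeas_i : ∀ i : Fin n, Measurable fun ω => edist (Y i ω) (Z (e (k ω) i) ω) ^ p :=
      fun i => hc.comp (hTmeas i)
    have h1 : ∫⁻ ω, G ω ∂P
        = (n : ℝ≥0∞)⁻¹ * ∑ i, ∫⁻ ω, edist (Y i ω) (Z (e (k ω) i) ω) ^ p ∂P := by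
      rw [← lintegral_finset_sum _ (fun i _ => hmeas_i i), ← lintegral_const_mul' _ _ hninv]
      exact lintegral_congr fun ω => (hkG ω).symm
    have h2 : ∫⁻ z, edist z.1 z.2 ^ p ∂γbar
        = (n : ℝ≥0∞)⁻¹ * ∑ i, ∫⁻ ω, edist (Y i ω) (Z (e (k ω) i) ω) ^ p ∂P := by
      rw [hγbar, lintegral_smul_measure, lintegral_finset_sum_measure]
      congr 1
      exact Finset.sum_congr rfl fun i _ => lintegral_map hc (hTmeas i)
    rw [h2, h1]
  -- finiteness of the expected cost
  obtain ⟨x₀, hx₀⟩ := hμmom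
  obtain ⟨x₁, hx₁⟩ := hνmom
  have h2p : (2 : ℝ≥0∞) ^ p ≠ ∞ := ENNReal.rpow_ne_top_of_nonneg hp0.le (by simp)
  have hY_mom : ∀ i, ∫⁻ ω, edist (Y i ω) x₀ ^ p ∂P < ∞ := by
    intro i
    have hme : Measurable fun x : X => edist x x₀ ^ p :=
      (ENNReal.continuous_rpow_const.measurable).comp
        (continuous_id.edist continuous_const).measurable
    calc ∫⁻ ω, edist (Y i ω) x₀ ^ p ∂P
        = ∫⁻ x, edist x x₀ ^ p ∂(P.map (Y i)) := (lintegral_map hme (hYmeas i)).symm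
      _ = ∫⁻ x, edist x₀ x ^ p ∂μ := by
          rw [hYlaw i]; exact lintegral_congr fun x => by rw [edist_comm]
      _ < ∞ := hx₀
  have hZ_mom : ∀ i, ∫⁻ ω, edist x₁ (Z i ω) ^ p ∂P < ∞ := by
    intro i
    have hme : Measurable fun x : X => edist x₁ x ^ p :=
      (ENNReal.continuous_rpow_const.measurable).comp
        (continuous_const.edist continuous_id).measurable
    calc ∫⁻ ω, edist x₁ (Z i ω) ^ p ∂P
        = ∫⁻ x, edist x₁ x ^ p ∂(P.map (Z i)) := (lintegral_map hme (hZmeas i)).symm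
      _ = ∫⁻ x, edist x₁ x ^ p ∂ν := by rw [hZlaw i]
      _ < ∞ := hx₁
  have hmom_i : ∀ i, ∫⁻ ω, edist (Y i ω) (Z i ω) ^ p ∂P < ∞ := by
    intro i
    have hmeas1 : Measurable fun ω => (2 : ℝ≥0∞) ^ p * edist (Y i ω) x₀ ^ p := by
      refine Measurable.const_mul ?_ _
      exact ((ENNReal.continuous_rpow_const.measurable).comp
        (continuous_id.edist continuous_const).measurable).comp (hYmeas i)
    have hmeas2 : Measurable fun _ : Ω => (2 : ℝ≥0∞) ^ p * 2 ^ p * edist x₀ x₁ ^ p := measurable_const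
    calc ∫⁻ ω, edist (Y i ω) (Z i ω) ^ p ∂P
        ≤ ∫⁻ ω, (2 ^ p * edist (Y i ω) x₀ ^ p + 2 ^ p * 2 ^ p * edist x₀ x₁ ^ p
            + 2 ^ p * 2 ^ p * edist x₁ (Z i ω) ^ p) ∂P :=
          lintegral_mono fun ω => edist_rpow_triple p hp0.le _ _ x₀ x₁
      _ = (∫⁻ ω, 2 ^ p * edist (Y i ω) x₀ ^ p ∂P)
            + (∫⁻ ω, 2 ^ p * 2 ^ p * edist x₀ x₁ ^ p ∂P)
            + (∫⁻ ω, 2 ^ p * 2 ^ p * edist x₁ (Z i ω) ^ p ∂P) := by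
          rw [lintegral_add_left (f := fun ω => 2 ^ p * edist (Y i ω) x₀ ^ p + 2 ^ p * 2 ^ p * edist x₀ x₁ ^ p) (hmeas1.add hmeas2), lintegral_add_left hmeas1]
      _ < ∞ := by
          have e1 : ∫⁻ ω, 2 ^ p * edist (Y i ω) x₀ ^ p ∂P
              = 2 ^ p * ∫⁻ ω, edist (Y i ω) x₀ ^ p ∂P := lintegral_const_mul' _ _ h2p
          have e2 : ∫⁻ ω, 2 ^ p * 2 ^ p * edist x₁ (Z i ω) ^ p ∂P
              = 2 ^ p * 2 ^ p * ∫⁻ ω, edist x₁ (Z i ω) ^ p ∂P :=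
            lintegral_const_mul' _ _ (ENNReal.mul_ne_top h2p h2p)
          rw [e1, e2, lintegral_const]
          refine ENNReal.add_lt_top.2 ⟨ENNReal.add_lt_top.2 ⟨?_, ?_⟩, ?_⟩
          · exact ENNReal.mul_lt_top h2p.lt_top (hY_mom i)
          · exact ENNReal.mul_lt_top
              (ENNReal.mul_lt_top (ENNReal.mul_lt_top h2p.lt_top h2p.lt_top)
                (ENNReal.rpow_lt_top_of_nonneg hp0.le (edist_ne_top _ _))) (by simp)
          · exact ENNReal.mul_lt_top (ENNReal.mul_lt_top h2p.lt_top h2p.lt_top) (hZ_mom i)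
  have hA_fin : ∫⁻ ω, G ω ∂P ≠ ∞ := by
    have hle : ∀ ω, G ω ≤ Gp 1 ω := fun ω => iInf_le _ 1
    have hGp1 : ∫⁻ ω, Gp 1 ω ∂P
        = (n : ℝ≥0∞)⁻¹ * ∑ i, ∫⁻ ω, edist (Y i ω) (Z i ω) ^ p ∂P := by
      rw [hGp]
      simp only [Equiv.Perm.coe_one, id_eq]
      rw [lintegral_const_mul' _ _ hninv,
        lintegral_finset_sum _ (fun i _ =>
          (show Measurable fun ω => edist (Y i ω) (Z i ω) ^ p from
            hc.comp ((hYmeas i).prodMk (hZmeas i))))]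
    refine ne_of_lt (lt_of_le_of_lt (lintegral_mono hle) ?_)
    rw [hGp1]
    exact ENNReal.mul_lt_top (lt_top_iff_ne_top.2 hninv)
      (ENNReal.sum_lt_top.2 fun i _ => hmom_i i)
  -- rewrite the RHS
  have hWemp : ∀ ω, wasserstein p (empiricalMeasure n fun i => Y i ω)
      (empiricalMeasure n fun i => Z i ω) ^ p = (G ω).toReal := by
    intro ω
    rw [wasserstein_pow_emp p hp n hn (fun i => Y i ω) (fun i => Z i ω)]
  have hRHS : ∫ ω, wasserstein p (empiricalMeasure n fun i => Y i ω)
      (empiricalMeasure n fun i => Z i ω) ^ p ∂P = (∫⁻ ω, G ω ∂P).toReal := by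
    rw [show (fun ω => wasserstein p (empiricalMeasure n fun i => Y i ω)
        (empiricalMeasure n fun i => Z i ω) ^ p) = fun ω => (G ω).toReal from funext hWemp]
    exact integral_toReal hGmeas.aemeasurable (Filter.Eventually.of_forall hGlt)
  rw [hRHS]
  -- bound the LHS by the cost of the constructed coupling
  have hWle : wassersteinEnn p μ ν ≤ (∫⁻ ω, G ω ∂P) ^ (1 / p) := by
    calc wassersteinEnn p μ ν ≤ (∫⁻ z, edist z.1 z.2 ^ p ∂γbar) ^ (1 / p) :=
        iInf_le_of_le γbar (iInf_le _ hcoup)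
      _ = (∫⁻ ω, G ω ∂P) ^ (1 / p) := by rw [hcost]
  have hfin' : (∫⁻ ω, G ω ∂P) ^ (1 / p) ≠ ∞ :=
    ENNReal.rpow_ne_top_of_nonneg (by positivity) hA_fin
  have h1 : wasserstein p μ ν ≤ ((∫⁻ ω, G ω ∂P) ^ (1 / p)).toReal :=
    ENNReal.toReal_mono hfin' hWle
  calc wasserstein p μ ν ^ p ≤ (((∫⁻ ω, G ω ∂P) ^ (1 / p)).toReal) ^ p :=
      Real.rpow_le_rpow ENNReal.toReal_nonneg h1 hp0.le
    _ = (∫⁻ ω, G ω ∂P).toReal := by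
        rw [ENNReal.toReal_rpow, ← ENNReal.rpow_mul, one_div_mul_cancel hpn, ENNReal.rpow_one]
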